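/- Let M ≥ 1, K ≥ 2, R_M > 0, R_U > 0, ε_M = 2^{R_M} − 1, ε_U = 2^{R_U} − 1. For ρ > 0 let z ~ Gamma(M,1) and u ~ Exp(K−1) be independent and let P_N(ρ) = P( z · max{0, min{f_ρ(z), f_ρ(u)}} < ε_U/ρ ), where f_ρ(y) = (y − ε_M/ρ)/(y(1+ε_M)). Then the diversity gain of NOMA unicasting equals 1: there exist constants c₁ > 0, c₂ > 0 and ρ₀ > 0 such that c₁/ρ ≤ P_N(ρ) ≤ c₂/ρ for all ρ ≥ ρ₀. -/

import Mathlib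

set_option maxHeartbeats 1000000


open Real MeasureTheory ProbabilityTheory

/-- The exponential CDF as a measure of `Iic`. -/
lemma exp_measure_Iic_eq {r t : ℝ} (hr : 0 < r) (ht : 0 ≤ t) :
    expMeasure r (Set.Iic t) = ENNReal.ofReal (1 - Real.exp (-(r * t))) := by
  haveI : IsProbabilityMeasure (expMeasure r) := isProbabilityMeasure_expMeasure hr
  have h1 : (expMeasure r (Set.Iic t)).toReal = 1 - Real.exp (-(r * t)) := by
    have h := cdf_expMeasure_eq hr t
    rw [cdf_eq_real, measureReal_def] at h
    rw [h, if_pos ht]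
  rw [← h1, ENNReal.ofReal_toReal (measure_ne_top _ _)]

/-- Upper bound on the Gamma CDF near zero. -/
lemma gamma_measure_Iic_le {M : ℕ} (hM : 1 ≤ M) {t : ℝ} (ht0 : 0 ≤ t) (ht1 : t ≤ 1) :
    gammaMeasure (M : ℝ) 1 (Set.Iic t) ≤ ENNReal.ofReal t := by
  have hΓ : (1 : ℝ) ≤ Real.Gamma (M : ℝ) := by
    obtain ⟨m, rfl⟩ : ∃ m, M = m + 1 := ⟨M - 1, (Nat.succ_pred_eq_of_pos hM).symm⟩
    push_cast
    rw [Real.Gamma_nat_eq_factorial]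
    exact_mod_cast Nat.one_le_iff_ne_zero.mpr (Nat.factorial_pos m).ne'
  have hΓ0 : (0 : ℝ) < Real.Gamma (M : ℝ) := lt_of_lt_of_le one_pos hΓ
  have hM1 : (0 : ℝ) ≤ (M : ℝ) - 1 := by
    have : (1 : ℝ) ≤ (M : ℝ) := by exact_mod_cast hM
    linarith
  rw [gammaMeasure, withDensity_apply _ measurableSet_Iic]
  calc ∫⁻ x in Set.Iic t, gammaPDF (M : ℝ) 1 x
      ≤ volume (Set.Icc 0 t) := by
        refine setLIntegral_le_meas measurableSet_Iic (fun a ha hat => ?_)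
          (fun a ha hat => ?_)
        · have ha0 : 0 ≤ a := hat.1
          rw [gammaPDF_of_nonneg ha0]
          refine ENNReal.ofReal_le_one.mpr ?_
          have h1 : (1 : ℝ) ^ (M : ℝ) / Real.Gamma (M : ℝ) ≤ 1 := by
            rw [Real.one_rpow]
            exact div_le_one_of_le₀ hΓ hΓ0.le
          have h2 : a ^ ((M : ℝ) - 1) ≤ 1 :=
            Real.rpow_le_one ha0 (hat.2.trans ht1) hM1
          have h3 : Real.exp (-(1 * a)) ≤ 1 := by
            rw [Real.exp_le_one_iff]
            nlinarith
          have hnn2 : (0 : ℝ) ≤ a ^ ((M : ℝ) - 1) := Real.rpow_nonneg ha0 _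
          have h12 : (1 : ℝ) ^ (M : ℝ) / Real.Gamma (M : ℝ) * a ^ ((M : ℝ) - 1) ≤ 1 := by
            simpa using mul_le_mul h1 h2 hnn2 zero_le_one
          calc (1 : ℝ) ^ (M : ℝ) / Real.Gamma (M : ℝ) * a ^ ((M : ℝ) - 1)
                * Real.exp (-(1 * a))
              ≤ 1 * Real.exp (-(1 * a)) :=
                mul_le_mul_of_nonneg_right h12 (Real.exp_pos _).le
            _ = Real.exp (-(1 * a)) := one_mul _
            _ ≤ 1 := h3
        · have : a < 0 := by
            by_contra hc
            exact hat ⟨not_lt.mp hc, Set.mem_Iic.mp ha⟩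
          exact gammaPDF_of_neg this
    _ = ENNReal.ofReal t := by rw [Real.volume_Icc, sub_zero]

/-- the diversity gain of NOMA unicasting is 1: the outage probability
`P_N(ρ)` decays exactly like `1/ρ` at high SNR. -/
theorem noma_unicast_diversity_gain_one
    (M K : ℕ) (hM : 1 ≤ M) (hK : 2 ≤ K)
    (RM RU : ℝ) (hRM : 0 < RM) (hRU : 0 < RU)
    (εM εU : ℝ) (hεM : εM = 2 ^ RM - 1) (hεU : εU = 2 ^ RU - 1)
    (f : ℝ → ℝ → ℝ) (hf : ∀ ρ y, f ρ y = (y - εM / ρ) / (y * (1 + εM)))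
    (μ : Measure (ℝ × ℝ))
    (hμ : μ = (gammaMeasure M 1).prod (expMeasure ((K : ℝ) - 1)))
    (PN : ℝ → ℝ)
    (hPN : ∀ ρ, PN ρ =
      (μ {p : ℝ × ℝ | p.1 * max 0 (min (f ρ p.1) (f ρ p.2)) < εU / ρ}).toReal) :
    ∃ c₁ c₂ ρ₀ : ℝ, 0 < c₁ ∧ 0 < c₂ ∧ 0 < ρ₀ ∧
      ∀ ρ : ℝ, ρ₀ ≤ ρ → c₁ / ρ ≤ PN ρ ∧ PN ρ ≤ c₂ / ρ := by
  have hεMpos : 0 < εM := by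
    rw [hεM]
    have h2 : (1 : ℝ) < 2 ^ RM :=
      (Real.one_lt_rpow_iff_of_pos two_pos).mpr (Or.inl ⟨one_lt_two, hRM⟩)
    linarith
  have hεUpos : 0 < εU := by
    rw [hεU]
    have h2 : (1 : ℝ) < 2 ^ RU :=
      (Real.one_lt_rpow_iff_of_pos two_pos).mpr (Or.inl ⟨one_lt_two, hRU⟩)
    linarith
  have hK1 : (0 : ℝ) < (K : ℝ) - 1 := by
    have : (2 : ℝ) ≤ (K : ℝ) := by exact_mod_cast hK
    linarith
  have hMpos : (0 : ℝ) < (M : ℝ) := by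
    have : (1 : ℝ) ≤ (M : ℝ) := by exact_mod_cast hM
    linarith
  haveI instG : IsProbabilityMeasure (gammaMeasure (M : ℝ) 1) :=
    isProbabilityMeasure_gammaMeasure hMpos zero_lt_one
  haveI instE : IsProbabilityMeasure (expMeasure ((K : ℝ) - 1)) :=
    isProbabilityMeasure_expMeasure hK1
  subst hμ
  set r : ℝ := (K : ℝ) - 1 with hr'
  have hε1 : (0 : ℝ) < 1 + εM := by linarith
  set b : ℝ := εM + 2 * (1 + εM) * εU with hb
  have hbpos : 0 < b := by positivity
  refine ⟨r * εM / 2, b + 2 * r * εM, max b (r * εM), by positivity, by positivity,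
    lt_max_iff.mpr (Or.inl hbpos), ?_⟩
  intro ρ hρ0
  have hρ : 0 < ρ := lt_of_lt_of_le (lt_max_iff.mpr (Or.inl hbpos)) hρ0
  have hρb : b ≤ ρ := le_trans (le_max_left _ _) hρ0
  have hρr : r * εM ≤ ρ := le_trans (le_max_right _ _) hρ0
  set E : Set (ℝ × ℝ) := {p : ℝ × ℝ | p.1 * max 0 (min (f ρ p.1) (f ρ p.2)) < εU / ρ} with hE
  -- Upper bound: E ⊆ {z ≤ b/ρ} ∪ {u ≤ 2εM/ρ}
  have hsub : E ⊆ (Set.Iic (b / ρ) ×ˢ Set.univ) ∪ (Set.univ ×ˢ Set.Iic (2 * εM / ρ)) := by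
    rintro ⟨z, u⟩ hp
    by_contra hcon
    simp only [Set.mem_union, Set.mem_prod, Set.mem_Iic, Set.mem_univ, and_true, true_and,
      not_or, not_le] at hcon
    obtain ⟨hz, hu⟩ := hcon
    simp only [hE, Set.mem_setOf_eq, hf] at hp
    set e : ℝ := εM / ρ with he'
    set d : ℝ := εU / ρ with hd'
    have he : 0 < e := div_pos hεMpos hρ
    have hd : 0 < d := div_pos hεUpos hρ
    have hbρ : b / ρ = e + 2 * (1 + εM) * d := by rw [hb, he', hd']; ring
    rw [hbρ] at hz
    have hu' : 2 * e < u := by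
      have h2e : 2 * e = 2 * εM / ρ := by rw [he']; ring
      linarith
    have hz0 : 0 < z := by nlinarith
    have hu0 : 0 < u := by linarith
    have hze : e < z := by nlinarith
    have h1 : d ≤ z * ((z - e) / (z * (1 + εM))) := by
      rw [mul_div_assoc', le_div_iff₀ (by positivity)]
      nlinarith [mul_pos hz0 (mul_pos hε1 hd)]
    have h2 : d ≤ z * ((u - e) / (u * (1 + εM))) := by
      rw [mul_div_assoc', le_div_iff₀ (by positivity)]
      have key : 2 * (1 + εM) * d ≤ z := by linarith
      have hue : u / 2 ≤ u - e := by linarith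
      nlinarith [mul_le_mul key hue (by positivity) hz0.le]
    have hfz0 : (0 : ℝ) ≤ (z - e) / (z * (1 + εM)) := by
      apply div_nonneg _ (by positivity)
      linarith
    have hfu0 : (0 : ℝ) ≤ (u - e) / (u * (1 + εM)) := by
      apply div_nonneg _ (by positivity)
      linarith
    rcases le_total ((z - e) / (z * (1 + εM))) ((u - e) / (u * (1 + εM))) with hle | hle
    · rw [min_eq_left hle, max_eq_right hfz0] at hp
      exact absurd hp (not_lt.mpr h1)
    · rw [min_eq_right hle, max_eq_right hfu0] at hp
      exact absurd hp (not_lt.mpr h2)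
  -- measure upper bound
  have hup : (gammaMeasure (M : ℝ) 1).prod (expMeasure r) E
      ≤ ENNReal.ofReal ((b + 2 * r * εM) / ρ) := by
    refine le_trans (measure_mono hsub) (le_trans (measure_union_le _ _) ?_)
    have hA : (gammaMeasure (M : ℝ) 1).prod (expMeasure r) (Set.Iic (b / ρ) ×ˢ Set.univ)
        = gammaMeasure (M : ℝ) 1 (Set.Iic (b / ρ)) := by
      rw [Measure.prod_prod, measure_univ, mul_one]
    have hB : (gammaMeasure (M : ℝ) 1).prod (expMeasure r) (Set.univ ×ˢ Set.Iic (2 * εM / ρ))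
        = expMeasure r (Set.Iic (2 * εM / ρ)) := by
      rw [Measure.prod_prod, measure_univ, one_mul]
    rw [hA, hB]
    have hg : gammaMeasure (M : ℝ) 1 (Set.Iic (b / ρ)) ≤ ENNReal.ofReal (b / ρ) :=
      gamma_measure_Iic_le hM (by positivity) ((div_le_one hρ).mpr hρb)
    have hx : expMeasure r (Set.Iic (2 * εM / ρ)) ≤ ENNReal.ofReal (2 * r * εM / ρ) := by
      rw [exp_measure_Iic_eq hK1 (by positivity)]
      apply ENNReal.ofReal_le_ofReal
      have := Real.add_one_le_exp (-(r * (2 * εM / ρ)))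
      have heq : 2 * r * εM / ρ = r * (2 * εM / ρ) := by ring
      rw [heq]
      linarith
    calc gammaMeasure (M : ℝ) 1 (Set.Iic (b / ρ)) + expMeasure r (Set.Iic (2 * εM / ρ))
        ≤ ENNReal.ofReal (b / ρ) + ENNReal.ofReal (2 * r * εM / ρ) := add_le_add hg hx
      _ = ENNReal.ofReal ((b + 2 * r * εM) / ρ) := by
          rw [← ENNReal.ofReal_add (by positivity) (by positivity)]
          congr 1
          ring
  -- measure lower bound
  have hlow : ENNReal.ofReal (r * εM / 2 / ρ)
      ≤ (gammaMeasure (M : ℝ) 1).prod (expMeasure r) E := by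
    have hsub2 : (Set.univ ×ˢ Set.Ioc (0 : ℝ) (εM / ρ)) ⊆ E := by
      rintro ⟨z, u⟩ ⟨-, hu1, hu2⟩
      simp only [hE, Set.mem_setOf_eq, hf]
      have hfu : (u - εM / ρ) / (u * (1 + εM)) ≤ 0 :=
        div_nonpos_of_nonpos_of_nonneg (by linarith) (by positivity)
      have hmin : min ((z - εM / ρ) / (z * (1 + εM))) ((u - εM / ρ) / (u * (1 + εM))) ≤ 0 :=
        le_trans (min_le_right _ _) hfu
      rw [max_eq_left hmin, mul_zero]
      exact div_pos hεUpos hρ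
    have h0 : expMeasure r (Set.Iic (0 : ℝ)) = 0 := by
      rw [exp_measure_Iic_eq hK1 le_rfl]
      simp
    have hIoc : expMeasure r (Set.Iic (εM / ρ)) ≤ expMeasure r (Set.Ioc 0 (εM / ρ)) := by
      calc expMeasure r (Set.Iic (εM / ρ))
          = expMeasure r (Set.Iic 0 ∪ Set.Ioc 0 (εM / ρ)) := by
            rw [Set.Iic_union_Ioc_eq_Iic (by positivity : (0:ℝ) ≤ εM / ρ)]
        _ ≤ expMeasure r (Set.Iic 0) + expMeasure r (Set.Ioc 0 (εM / ρ)) :=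
            measure_union_le _ _
        _ = expMeasure r (Set.Ioc 0 (εM / ρ)) := by rw [h0, zero_add]
    have hprod : (gammaMeasure (M : ℝ) 1).prod (expMeasure r)
        (Set.univ ×ˢ Set.Ioc (0 : ℝ) (εM / ρ)) = expMeasure r (Set.Ioc 0 (εM / ρ)) := by
      rw [Measure.prod_prod, measure_univ, one_mul]
    have hcdf : ENNReal.ofReal (r * εM / 2 / ρ) ≤ expMeasure r (Set.Iic (εM / ρ)) := by
      rw [exp_measure_Iic_eq hK1 (by positivity)]
      apply ENNReal.ofReal_le_ofReal
      set x : ℝ := r * (εM / ρ) with hx'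
      have hx0 : 0 < x := by positivity
      have hx1 : x ≤ 1 := by
        rw [hx', ← mul_div_assoc]
        exact (div_le_one hρ).mpr hρr
      have hxx : Real.exp (-x) ≤ (1 + x)⁻¹ := by
        rw [Real.exp_neg]
        exact inv_anti₀ (by linarith) (by linarith [Real.add_one_le_exp x])
      have h1x : (0 : ℝ) < 1 + x := by linarith
      have hinv : (1 + x)⁻¹ * (1 + x) = 1 := inv_mul_cancel₀ h1x.ne'
      have heq : r * εM / 2 / ρ = x / 2 := by rw [hx']; ring
      rw [heq]
      nlinarith [mul_nonneg hx0.le (sub_nonneg.mpr hx1), inv_nonneg.mpr h1x.le]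
    calc ENNReal.ofReal (r * εM / 2 / ρ) ≤ expMeasure r (Set.Iic (εM / ρ)) := hcdf
      _ ≤ expMeasure r (Set.Ioc 0 (εM / ρ)) := hIoc
      _ = _ := hprod.symm
      _ ≤ _ := measure_mono hsub2
  rw [hPN ρ]
  constructor
  · have := ENNReal.toReal_mono (measure_ne_top _ E) hlow
    rwa [ENNReal.toReal_ofReal (by positivity)] at this
  · exact ENNReal.toReal_le_of_le_ofReal (by positivity) hup
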